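/- Let H be symmetric positive definite and x a random vector with E[xxᵀ] = H satisfying E[‖x‖² xxᵀ] ⪯ R²H, and let Σ be symmetric PSD. If 0 < γ < 1/R² and C is a symmetric PSD matrix satisfying HC + CH = γ E[(xᵀCx)xxᵀ] + γΣ and C ⪯ (γ‖Σ‖_H / (1−γR²)) I, then Tr(C) ≤ (γ/2) Tr(H^{-1}Σ) + (1/2)(γ²R²/(1−γR²)) d ‖Σ‖_H, where ‖Σ‖_H := ‖H^{-1/2}ΣH^{-1/2}‖. -/

import Mathlib

open MeasureTheory Matrix
open scoped Matrix.Norms.L2Operator MatrixOrder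

lemma psd_trace_nonneg' {n : Type*} [Fintype n] [DecidableEq n] {A : Matrix n n ℝ}
    (hA : A.PosSemidef) : 0 ≤ A.trace := by
  rw [Matrix.trace]
  refine Finset.sum_nonneg fun i _ => ?_
  simpa using hA.dotProduct_mulVec_nonneg (Pi.single i 1)

lemma psd_trace_mul_nonneg' {n : Type*} [Fintype n] [DecidableEq n]
    {A B : Matrix n n ℝ} (hA : A.PosSemidef) (hB : B.PosSemidef) :
    0 ≤ (A * B).trace := by
  obtain ⟨X, rfl⟩ := CStarAlgebra.nonneg_iff_eq_star_mul_self.mp hA.nonneg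
  rw [Matrix.mul_assoc, Matrix.trace_mul_comm]
  exact psd_trace_nonneg' (hB.mul_mul_conjTranspose_same X)

lemma isHermitian_of_integral_repr {d : ℕ} {Ω : Type*} [MeasurableSpace Ω] (μ : Measure Ω)
    (x : Ω → (Fin d → ℝ)) (φ : Ω → ℝ) (A : Matrix (Fin d) (Fin d) ℝ)
    (hA : ∀ i j, A i j = ∫ ω, φ ω * (x ω i * x ω j) ∂μ) : A.IsHermitian := by
  have : Aᴴ = A := by
    ext i j
    rw [Matrix.conjTranspose_apply, star_trivial, hA, hA]
    congr 1
    funext ω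
    ring
  exact this

/-- Refined bound on the stationary covariance: with `H = E[xxᵀ]` positive
definite, `E[‖x‖² xxᵀ] ⪯ R²H`, `Σ` PSD, `0 < γ < 1/R²`, if the symmetric PSD
matrix `C` satisfies `HC + CH = γE[(xᵀCx)xxᵀ] + γΣ` together with the crude
bound `C ⪯ (γ‖Σ‖_H/(1−γR²)) I`, then
`Tr(C) ≤ (γ/2)Tr(H⁻¹Σ) + (1/2)(γ²R²/(1−γR²)) d ‖Σ‖_H`,
where `‖Σ‖_H = ‖H^{-1/2}ΣH^{-1/2}‖` (spectral norm). -/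
theorem refined_stationary_covariance_trace_bound
    {d : ℕ} {Ω : Type*} [MeasurableSpace Ω] (μ : Measure Ω)
    [IsProbabilityMeasure μ] (x : Ω → (Fin d → ℝ))
    (H M4 : Matrix (Fin d) (Fin d) ℝ) (hH : H.PosDef)
    (hHdef : ∀ i j, H i j = ∫ ω, x ω i * x ω j ∂μ)
    (hM4def : ∀ i j, M4 i j = ∫ ω, (∑ k, x ω k ^ 2) * (x ω i * x ω j) ∂μ)
    (hM4int : ∀ i j, Integrable (fun ω => (∑ k, x ω k ^ 2) * (x ω i * x ω j)) μ)
    (R2 : ℝ) (hR2 : 0 < R2) (hR : (R2 • H - M4).PosSemidef)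
    (Sg : Matrix (Fin d) (Fin d) ℝ) (hSg : Sg.PosSemidef)
    (γ : ℝ) (hγ0 : 0 < γ) (hγ : γ < 1 / R2)
    (C SC : Matrix (Fin d) (Fin d) ℝ) (hC : C.PosSemidef)
    (hSC : ∀ i j, SC i j = ∫ ω, (x ω ⬝ᵥ C.mulVec (x ω)) * (x ω i * x ω j) ∂μ)
    (heq : H * C + C * H = γ • SC + γ • Sg)
    (hcrude : (((γ * ‖(CFC.sqrt H)⁻¹ * Sg * (CFC.sqrt H)⁻¹‖ /
        (1 - γ * R2)) • (1 : Matrix (Fin d) (Fin d) ℝ)) - C).PosSemidef) :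
    C.trace ≤ (γ / 2) * (H⁻¹ * Sg).trace +
      (1 / 2) * (γ ^ 2 * R2 / (1 - γ * R2)) * d *
        ‖(CFC.sqrt H)⁻¹ * Sg * (CFC.sqrt H)⁻¹‖ := by
  set N : ℝ := ‖(CFC.sqrt H)⁻¹ * Sg * (CFC.sqrt H)⁻¹‖ with hN
  set c : ℝ := γ * N / (1 - γ * R2) with hc
  have hpos : 0 < 1 - γ * R2 := by
    have : γ * R2 < 1 := by
      rw [div_eq_mul_inv, one_mul] at hγ
      calc γ * R2 < R2⁻¹ * R2 := mul_lt_mul_of_pos_right hγ hR2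
        _ = 1 := inv_mul_cancel₀ hR2.ne'
    linarith
  have hc0 : 0 ≤ c := div_nonneg (mul_nonneg hγ0.le (norm_nonneg _)) hpos.le
  have hdet : IsUnit H.det := isUnit_iff_ne_zero.mpr hH.det_pos.ne'
  have hHinv : H⁻¹ * H = 1 := Matrix.nonsing_inv_mul H hdet
  have hinvH : H * H⁻¹ = 1 := Matrix.mul_nonsing_inv H hdet
  -- trace identity from the fixed-point equation
  have htr : 2 * C.trace = γ * (H⁻¹ * SC).trace + γ * (H⁻¹ * Sg).trace := by
    have h1 : (H⁻¹ * (H * C + C * H)).trace = 2 * C.trace := by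
      rw [Matrix.mul_add, Matrix.trace_add, ← Matrix.mul_assoc, hHinv, Matrix.one_mul,
        Matrix.trace_mul_comm (H⁻¹) (C * H), Matrix.mul_assoc, hinvH, Matrix.mul_one]
      ring
    have h2 : (H⁻¹ * (γ • SC + γ • Sg)).trace
        = γ * (H⁻¹ * SC).trace + γ * (H⁻¹ * Sg).trace := by
      rw [Matrix.mul_add, Matrix.trace_add, Matrix.mul_smul, Matrix.mul_smul,
        Matrix.trace_smul, Matrix.trace_smul, smul_eq_mul, smul_eq_mul]
    rw [← h1, heq, h2]
  -- integrability of quartic monomials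
  have hq : ∀ k l i j, Integrable (fun ω => x ω k * x ω l * (x ω i * x ω j)) μ := by
    intro k l i j
    have hf : ∀ i j, AEStronglyMeasurable (fun ω => (∑ m, x ω m ^ 2) * (x ω i * x ω j)) μ :=
      fun i j => (hM4int i j).1
    have hg : AEStronglyMeasurable
        (fun ω => ∑ m, (∑ m', x ω m' ^ 2) * (x ω m * x ω m)) μ :=
      Finset.aestronglyMeasurable_fun_sum _ fun m _ => hf m m
    have hmeas : AEStronglyMeasurable (fun ω => x ω k * x ω l * (x ω i * x ω j)) μ := by
      have heqfun : (fun ω => x ω k * x ω l * (x ω i * x ω j))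
          = fun ω => ((∑ m, x ω m ^ 2) * (x ω k * x ω l)) * ((∑ m, x ω m ^ 2) * (x ω i * x ω j)) /
              (∑ m, (∑ m', x ω m' ^ 2) * (x ω m * x ω m)) := by
        funext ω
        have hdenom : (∑ m, (∑ m', x ω m' ^ 2) * (x ω m * x ω m))
            = (∑ m, x ω m ^ 2) * (∑ m, x ω m ^ 2) := by
          rw [← Finset.mul_sum]
          congr 1
          exact Finset.sum_congr rfl fun m _ => (sq (x ω m)).symm
        rw [hdenom]
        rcases eq_or_ne (∑ m, x ω m ^ 2) 0 with h0 | h0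
        · have hzero : ∀ m, x ω m = 0 := by
            intro m
            have hm : x ω m ^ 2 ≤ ∑ m', x ω m' ^ 2 :=
              Finset.single_le_sum (fun n _ => sq_nonneg (x ω n)) (Finset.mem_univ m)
            have h2 : x ω m ^ 2 = 0 := le_antisymm (h0 ▸ hm) (sq_nonneg _)
            exact pow_eq_zero_iff two_ne_zero |>.mp h2
          simp [hzero, h0]
        · rw [eq_div_iff (mul_ne_zero h0 h0)]
          ring
      rw [heqfun]
      exact (((hf k l).aemeasurable.mul (hf i j).aemeasurable).div hg.aemeasurable).aestronglyMeasurable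
    refine Integrable.mono' (((hM4int i i).add (hM4int j j)).div_const 2) hmeas
      (Filter.Eventually.of_forall fun ω => ?_)
    have hs0 : (0:ℝ) ≤ ∑ m, x ω m ^ 2 := Finset.sum_nonneg fun m _ => sq_nonneg _
    have hk : x ω k ^ 2 ≤ ∑ m, x ω m ^ 2 :=
      Finset.single_le_sum (fun n _ => sq_nonneg (x ω n)) (Finset.mem_univ k)
    have hl : x ω l ^ 2 ≤ ∑ m, x ω m ^ 2 :=
      Finset.single_le_sum (fun n _ => sq_nonneg (x ω n)) (Finset.mem_univ l)
    have h1 : |x ω k * x ω l| ≤ ∑ m, x ω m ^ 2 :=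
      abs_le.mpr ⟨by nlinarith [sq_nonneg (x ω k + x ω l)],
        by nlinarith [sq_nonneg (x ω k - x ω l)]⟩
    have h2 : |x ω i * x ω j| ≤ (x ω i ^ 2 + x ω j ^ 2) / 2 :=
      abs_le.mpr ⟨by nlinarith [sq_nonneg (x ω i + x ω j)],
        by nlinarith [sq_nonneg (x ω i - x ω j)]⟩
    calc ‖x ω k * x ω l * (x ω i * x ω j)‖ = |x ω k * x ω l| * |x ω i * x ω j| := by
          rw [Real.norm_eq_abs, abs_mul]
      _ ≤ (∑ m, x ω m ^ 2) * ((x ω i ^ 2 + x ω j ^ 2) / 2) :=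
          mul_le_mul h1 h2 (abs_nonneg _) hs0
      _ = ((∑ m, x ω m ^ 2) * (x ω i * x ω i) + (∑ m, x ω m ^ 2) * (x ω j * x ω j)) / 2 := by
          ring
  -- integrability for the fourth-moment matrix entries weighted by the quadratic form of C
  have hCint : ∀ i j, Integrable (fun ω => (x ω ⬝ᵥ C.mulVec (x ω)) * (x ω i * x ω j)) μ := by
    intro i j
    have hexp2 : (fun ω => (x ω ⬝ᵥ C.mulVec (x ω)) * (x ω i * x ω j))
        = fun ω => ∑ k, ∑ l, C k l * (x ω k * x ω l * (x ω i * x ω j)) := by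
      funext ω
      simp only [dotProduct, Matrix.mulVec, Finset.sum_mul, Finset.mul_sum]
      exact Finset.sum_congr rfl fun k _ => Finset.sum_congr rfl fun l _ => by ring
    rw [hexp2]
    exact integrable_finset_sum _ fun k _ =>
      integrable_finset_sum _ fun l _ => (hq k l i j).const_mul _
  -- generic quadratic form representation
  have hquad : ∀ (φ : Ω → ℝ), (∀ i j, Integrable (fun ω => φ ω * (x ω i * x ω j)) μ) →
      ∀ (A : Matrix (Fin d) (Fin d) ℝ), (∀ i j, A i j = ∫ ω, φ ω * (x ω i * x ω j) ∂μ) →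
      ∀ v : Fin d → ℝ, Integrable (fun ω => φ ω * (v ⬝ᵥ x ω) ^ 2) μ ∧
        v ⬝ᵥ A.mulVec v = ∫ ω, φ ω * (v ⬝ᵥ x ω) ^ 2 ∂μ := by
    intro φ hint A hAdef v
    have hexp : (fun ω => φ ω * (v ⬝ᵥ x ω) ^ 2)
        = fun ω => ∑ i, ∑ j, (v i * v j) * (φ ω * (x ω i * x ω j)) := by
      funext ω
      rw [sq, dotProduct, Finset.sum_mul_sum, Finset.mul_sum]
      refine Finset.sum_congr rfl fun i _ => ?_
      rw [Finset.mul_sum]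
      exact Finset.sum_congr rfl fun j _ => by ring
    have hterm : ∀ i j, Integrable (fun ω => (v i * v j) * (φ ω * (x ω i * x ω j))) μ :=
      fun i j => (hint i j).const_mul _
    have hint2 : Integrable (fun ω => φ ω * (v ⬝ᵥ x ω) ^ 2) μ := by
      rw [hexp]
      exact integrable_finset_sum _ fun i _ => integrable_finset_sum _ fun j _ => hterm i j
    refine ⟨hint2, ?_⟩
    calc v ⬝ᵥ A.mulVec v = ∑ i, ∑ j, ∫ ω, (v i * v j) * (φ ω * (x ω i * x ω j)) ∂μ := by
          simp only [dotProduct, Matrix.mulVec, Finset.mul_sum]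
          refine Finset.sum_congr rfl fun i _ => Finset.sum_congr rfl fun j _ => ?_
          rw [hAdef i j, integral_const_mul]
          ring
      _ = ∫ ω, ∑ i, ∑ j, (v i * v j) * (φ ω * (x ω i * x ω j)) ∂μ := by
          rw [Finset.sum_congr rfl fun i (_ : i ∈ Finset.univ) =>
              (integral_finset_sum Finset.univ fun j _ => hterm i j).symm,
            ← integral_finset_sum _ (fun i _ => integrable_finset_sum _ fun j _ => hterm i j)]
      _ = ∫ ω, φ ω * (v ⬝ᵥ x ω) ^ 2 ∂μ := by rw [hexp]
  -- pointwise crude bound on the quadratic form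
  have hxCx : ∀ ω, x ω ⬝ᵥ C.mulVec (x ω) ≤ c * (∑ k, x ω k ^ 2) := by
    intro ω
    have h0 := hcrude.dotProduct_mulVec_nonneg (x ω)
    simp only [star_trivial, Matrix.sub_mulVec, Matrix.smul_mulVec, Matrix.one_mulVec,
      dotProduct_sub, dotProduct_smul, smul_eq_mul] at h0
    have hself : x ω ⬝ᵥ x ω = ∑ k, x ω k ^ 2 := by
      simp [dotProduct, sq]
    rw [hself] at h0
    linarith
  -- the key PSD comparison
  have hkey : (c • M4 - SC).PosSemidef := by
    have hM4h : M4.IsHermitian := isHermitian_of_integral_repr μ x _ M4 hM4def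
    have hSCh : SC.IsHermitian := isHermitian_of_integral_repr μ x _ SC hSC
    refine .of_dotProduct_mulVec_nonneg ?_ fun v => ?_
    · have : (c • M4 - SC)ᴴ = c • M4 - SC := by
        rw [Matrix.conjTranspose_sub, Matrix.conjTranspose_smul, star_trivial,
          hM4h.eq, hSCh.eq]
      exact this
    · obtain ⟨hiM, hqM⟩ := hquad _ hM4int M4 hM4def v
      obtain ⟨hiC, hqC⟩ := hquad _ hCint SC hSC v
      have hle : v ⬝ᵥ SC.mulVec v ≤ c * (v ⬝ᵥ M4.mulVec v) := by
        rw [hqM, hqC, ← integral_const_mul]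
        refine integral_mono hiC (hiM.const_mul c) fun ω => ?_
        have h1 := hxCx ω
        have h2 : (0:ℝ) ≤ (v ⬝ᵥ x ω) ^ 2 := sq_nonneg _
        calc (x ω ⬝ᵥ C.mulVec (x ω)) * (v ⬝ᵥ x ω) ^ 2
            ≤ (c * ∑ k, x ω k ^ 2) * (v ⬝ᵥ x ω) ^ 2 := mul_le_mul_of_nonneg_right h1 h2
          _ = c * ((∑ k, x ω k ^ 2) * (v ⬝ᵥ x ω) ^ 2) := by ring
      simp only [star_trivial, Matrix.sub_mulVec, Matrix.smul_mulVec, dotProduct_sub,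
        dotProduct_smul, smul_eq_mul]
      linarith
  -- trace comparisons
  have hb1 : (H⁻¹ * SC).trace ≤ c * (H⁻¹ * M4).trace := by
    have h0 := psd_trace_mul_nonneg' hH.inv.posSemidef hkey
    rw [Matrix.mul_sub, Matrix.trace_sub, Matrix.mul_smul, Matrix.trace_smul,
      smul_eq_mul] at h0
    linarith
  have hb2 : (H⁻¹ * M4).trace ≤ R2 * d := by
    have h0 := psd_trace_mul_nonneg' hH.inv.posSemidef hR
    rw [Matrix.mul_sub, Matrix.trace_sub, Matrix.mul_smul, Matrix.trace_smul,
      smul_eq_mul, hHinv, Matrix.trace_one] at h0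
    simpa using h0
  have hb3 : (H⁻¹ * SC).trace ≤ c * (R2 * d) :=
    hb1.trans (mul_le_mul_of_nonneg_left hb2 hc0)
  have hfin : (1 / 2) * (γ ^ 2 * R2 / (1 - γ * R2)) * d * N = γ / 2 * (c * (R2 * d)) := by
    rw [hc]; field_simp
  rw [hfin]
  nlinarith [mul_le_mul_of_nonneg_left hb3 hγ0.le]
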